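/- Let G be a finite simple graph without isolated vertices. Then G has a minimum dominating set S (i.e., a dominating set of cardinality γ(G)) in which every vertex of S has an external private neighbour: for each u ∈ S there exists a vertex w ∉ S such that u is the only neighbour of w in S. -/

import Mathlib

theorem stmt_7 {V : Type*} [Fintype V] [DecidableEq V] (G : SimpleGraph V)
    (hiso : ∀ v : V, ∃ w : V, G.Adj v w) :
    ∃ S : Finset V,
      (∀ v : V, v ∉ S → ∃ u ∈ S, G.Adj v u) ∧
      (∀ T : Finset V, (∀ v : V, v ∉ T → ∃ u ∈ T, G.Adj v u) → S.card ≤ T.card) ∧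
      (∀ u ∈ S, ∃ w : V, w ∉ S ∧ G.Adj w u ∧ ∀ u' ∈ S, G.Adj w u' → u' = u) := by
  classical
  set N := Fintype.card V with hN
  set iso : Finset V → ℕ :=
    fun T => (T.filter (fun x => ∀ y ∈ T, ¬ G.Adj x y)).card with hisoDef
  set f : Finset V → ℕ := fun T => (N + 1) * T.card + iso T with hf
  set D : Finset (Finset V) :=
    Finset.univ.filter (fun T => ∀ v : V, v ∉ T → ∃ u ∈ T, G.Adj v u) with hD
  have hUnivD : (Finset.univ : Finset V) ∈ D := by simp [hD]
  obtain ⟨S, hSD, hSmin⟩ := D.exists_min_image f ⟨_, hUnivD⟩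
  have hSdom : ∀ v : V, v ∉ S → ∃ u ∈ S, G.Adj v u := by
    simpa [hD] using hSD
  have hisole : ∀ T : Finset V, iso T ≤ T.card := fun T => Finset.card_filter_le _ _
  have hcardle : ∀ T : Finset V, T.card ≤ N := fun T => Finset.card_le_univ T
  have hmincard : ∀ T : Finset V,
      (∀ v : V, v ∉ T → ∃ u ∈ T, G.Adj v u) → S.card ≤ T.card := by
    intro T hT
    have hTD : T ∈ D := by simp [hD]; exact hT
    have hle := hSmin T hTD
    by_contra h
    push_neg at h
    have h1 : (N + 1) * S.card ≤ f S := Nat.le_add_right _ _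
    have h2 : f T < (N + 1) * (T.card + 1) := by
      have e1 := hisole T
      have e2 := hcardle T
      simp only [hf]
      nlinarith
    have h3 : (N + 1) * (T.card + 1) ≤ (N + 1) * S.card :=
      Nat.mul_le_mul_left _ (by omega)
    omega
  refine ⟨S, hSdom, hmincard, ?_⟩
  intro u hu
  by_contra hpriv
  push_neg at hpriv
  -- hpriv : ∀ w, w ∉ S → G.Adj w u → ∃ u' ∈ S, G.Adj w u' ∧ u' ≠ u
  by_cases hcase : ∃ y ∈ S, G.Adj u y
  · -- u has a neighbour inside S : S.erase u is dominating, contradicting minimality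
    obtain ⟨y, hyS, hyAdj⟩ := hcase
    have hyne : y ≠ u := by rintro rfl; exact G.loopless.irrefl _ hyAdj
    have hdom : ∀ v : V, v ∉ S.erase u → ∃ x ∈ S.erase u, G.Adj v x := by
      intro v hv
      by_cases hvu : v = u
      · rw [hvu]
        exact ⟨y, Finset.mem_erase.mpr ⟨hyne, hyS⟩, hyAdj⟩
      · have hvS : v ∉ S := fun hvS => hv (Finset.mem_erase.mpr ⟨hvu, hvS⟩)
        obtain ⟨x, hxS, hxAdj⟩ := hSdom v hvS
        by_cases hxu : x = u
        · rw [hxu] at hxAdj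
          obtain ⟨x', hx'S, hx'Adj, hx'ne⟩ := hpriv v hvS hxAdj
          exact ⟨x', Finset.mem_erase.mpr ⟨hx'ne, hx'S⟩, hx'Adj⟩
        · exact ⟨x, Finset.mem_erase.mpr ⟨hxu, hxS⟩, hxAdj⟩
    have h1 := hmincard _ hdom
    have h2 : (S.erase u).card = S.card - 1 := Finset.card_erase_of_mem hu
    have h3 : 1 ≤ S.card := Finset.card_pos.mpr ⟨u, hu⟩
    omega
  · -- u has no neighbour inside S : swap u with an outside neighbour w
    push_neg at hcase
    obtain ⟨w, hwAdj⟩ := hiso u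
    have hwS : w ∉ S := fun h => hcase w h hwAdj
    obtain ⟨z, hzS, hzAdj, hzne⟩ := hpriv w hwS hwAdj.symm
    set T := insert w (S.erase u) with hTdef
    have hwnotE : w ∉ S.erase u := fun h => hwS (Finset.mem_of_mem_erase h)
    have hcardT : T.card = S.card := by
      rw [hTdef, Finset.card_insert_of_notMem hwnotE, Finset.card_erase_of_mem hu]
      have : 1 ≤ S.card := Finset.card_pos.mpr ⟨u, hu⟩
      omega
    have hdomT : ∀ v : V, v ∉ T → ∃ x ∈ T, G.Adj v x := by
      intro v hv
      have hvw : v ≠ w := by rintro rfl; exact hv (Finset.mem_insert_self _ _)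
      by_cases hvu : v = u
      · rw [hvu]
        exact ⟨w, Finset.mem_insert_self _ _, hwAdj⟩
      · have hvS : v ∉ S := fun hvS =>
          hv (Finset.mem_insert_of_mem (Finset.mem_erase.mpr ⟨hvu, hvS⟩))
        obtain ⟨x, hxS, hxAdj⟩ := hSdom v hvS
        by_cases hxu : x = u
        · rw [hxu] at hxAdj
          obtain ⟨x', hx'S, hx'Adj, hx'ne⟩ := hpriv v hvS hxAdj
          exact ⟨x', Finset.mem_insert_of_mem (Finset.mem_erase.mpr ⟨hx'ne, hx'S⟩), hx'Adj⟩
        · exact ⟨x, Finset.mem_insert_of_mem (Finset.mem_erase.mpr ⟨hxu, hxS⟩), hxAdj⟩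
    have hTD : T ∈ D := by simp [hD]; exact hdomT
    have hfle := hSmin T hTD
    have hisoST : iso S ≤ iso T := by
      simp only [hf, hcardT] at hfle
      omega
    -- but iso T < iso S
    have hzT : z ∈ T := Finset.mem_insert_of_mem (Finset.mem_erase.mpr ⟨hzne, hzS⟩)
    have hsub : T.filter (fun x => ∀ y ∈ T, ¬ G.Adj x y) ⊆
        (S.filter (fun x => ∀ y ∈ S, ¬ G.Adj x y)).erase u := by
      intro x hx
      rw [Finset.mem_filter] at hx
      obtain ⟨hxT, hxiso⟩ := hx
      have hxw : x ≠ w := by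
        rintro rfl
        exact hxiso z hzT hzAdj
      have hxE : x ∈ S.erase u := by
        rcases Finset.mem_insert.mp hxT with h | h
        · exact absurd h hxw
        · exact h
      have hxu : x ≠ u := (Finset.mem_erase.mp hxE).1
      have hxS : x ∈ S := (Finset.mem_erase.mp hxE).2
      refine Finset.mem_erase.mpr ⟨hxu, Finset.mem_filter.mpr ⟨hxS, ?_⟩⟩
      intro y hyS hAdjXY
      by_cases hyu : y = u
      · subst hyu
        exact hcase x hxS hAdjXY.symm
      · exact hxiso y (Finset.mem_insert_of_mem (Finset.mem_erase.mpr ⟨hyu, hyS⟩)) hAdjXY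
    have huiso : u ∈ S.filter (fun x => ∀ y ∈ S, ¬ G.Adj x y) :=
      Finset.mem_filter.mpr ⟨hu, hcase⟩
    have h1 : iso T ≤ ((S.filter (fun x => ∀ y ∈ S, ¬ G.Adj x y)).erase u).card :=
      Finset.card_le_card hsub
    have h2 : ((S.filter (fun x => ∀ y ∈ S, ¬ G.Adj x y)).erase u).card = iso S - 1 :=
      Finset.card_erase_of_mem huiso
    have h3 : 1 ≤ iso S := Finset.card_pos.mpr ⟨u, huiso⟩
    omega
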